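/- For all x in [0,1], arcsin(x) ≤ (π(2-√2)/(π-2√2))·(sqrt(1+x) - sqrt(1-x)) / (√2(4-π)/(π-2√2) + sqrt(1+x) + sqrt(1-x)). -/

import Mathlib

open Real Set


private lemma nonneg_of_deriv (f f' : ℝ → ℝ) (hf : ∀ u, HasDerivAt f (f' u) u)
    (h0 : f 0 = 0) (hd : ∀ u, 0 ≤ u → 0 ≤ f' u) : ∀ t, 0 ≤ t → 0 ≤ f t := by
  intro t ht
  have hm : MonotoneOn f (Set.Ici 0) := by
    apply monotoneOn_of_deriv_nonneg (convex_Ici 0)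
      (fun u _ => (hf u).continuousAt.continuousWithinAt)
      (fun u _ => (hf u).differentiableAt.differentiableWithinAt)
    intro u hu
    rw [(hf u).deriv]
    exact hd u (le_of_lt (by simpa using hu))
  simpa [h0] using hm Set.self_mem_Ici (Set.mem_Ici.mpr ht) ht

private lemma cos2 : ∀ t : ℝ, 0 ≤ t → 0 ≤ Real.cos t - (1 - t^2/2) := by
  apply nonneg_of_deriv _ (fun u => u - Real.sin u)
  · intro u
    have h := (Real.hasDerivAt_cos u).sub (((hasDerivAt_pow 2 u).div_const 2).const_sub 1)
    exact h.congr_deriv (by push_cast; ring)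
  · simp
  · intro u hu; simpa using Real.sin_le hu

private lemma sin3 : ∀ t : ℝ, 0 ≤ t → 0 ≤ Real.sin t - (t - t^3/6) := by
  apply nonneg_of_deriv _ (fun u => Real.cos u - (1 - u^2/2))
  · intro u
    have h := (Real.hasDerivAt_sin u).sub ((hasDerivAt_id u).sub ((hasDerivAt_pow 3 u).div_const 6))
    exact h.congr_deriv (by push_cast; ring)
  · simp
  · exact cos2

private lemma cos4 : ∀ t : ℝ, 0 ≤ t → 0 ≤ (1 - t^2/2 + t^4/24) - Real.cos t := by
  apply nonneg_of_deriv _ (fun u => Real.sin u - (u - u^3/6))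
  · intro u
    have h := ((((hasDerivAt_pow 2 u).div_const 2).const_sub 1).add
      ((hasDerivAt_pow 4 u).div_const 24)).sub (Real.hasDerivAt_cos u)
    exact h.congr_deriv (by push_cast; ring)
  · simp
  · exact sin3

private lemma sin5 : ∀ t : ℝ, 0 ≤ t → 0 ≤ (t - t^3/6 + t^5/120) - Real.sin t := by
  apply nonneg_of_deriv _ (fun u => (1 - u^2/2 + u^4/24) - Real.cos u)
  · intro u
    have h := (((hasDerivAt_id u).sub ((hasDerivAt_pow 3 u).div_const 6)).add
      ((hasDerivAt_pow 5 u).div_const 120)).sub (Real.hasDerivAt_sin u)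
    exact h.congr_deriv (by push_cast; ring)
  · simp
  · exact cos4

private lemma cos6 : ∀ t : ℝ, 0 ≤ t → 0 ≤ Real.cos t - (1 - t^2/2 + t^4/24 - t^6/720) := by
  apply nonneg_of_deriv _ (fun u => (u - u^3/6 + u^5/120) - Real.sin u)
  · intro u
    have h := (Real.hasDerivAt_cos u).sub
      (((((hasDerivAt_pow 2 u).div_const 2).const_sub 1).add
        ((hasDerivAt_pow 4 u).div_const 24)).sub ((hasDerivAt_pow 6 u).div_const 720))
    exact h.congr_deriv (by push_cast; ring)
  · simp
  · exact sin5

private lemma sin7 : ∀ t : ℝ, 0 ≤ t → 0 ≤ Real.sin t - (t - t^3/6 + t^5/120 - t^7/5040) := by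
  apply nonneg_of_deriv _ (fun u => Real.cos u - (1 - u^2/2 + u^4/24 - u^6/720))
  · intro u
    have h := (Real.hasDerivAt_sin u).sub
      ((((hasDerivAt_id u).sub ((hasDerivAt_pow 3 u).div_const 6)).add
        ((hasDerivAt_pow 5 u).div_const 120)).sub ((hasDerivAt_pow 7 u).div_const 5040))
    exact h.congr_deriv (by push_cast; ring)
  · simp
  · exact cos6

private lemma cos8 : ∀ t : ℝ, 0 ≤ t → 0 ≤ (1 - t^2/2 + t^4/24 - t^6/720 + t^8/40320) - Real.cos t := by
  apply nonneg_of_deriv _ (fun u => Real.sin u - (u - u^3/6 + u^5/120 - u^7/5040))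
  · intro u
    have h := ((((((hasDerivAt_pow 2 u).div_const 2).const_sub 1).add
        ((hasDerivAt_pow 4 u).div_const 24)).sub ((hasDerivAt_pow 6 u).div_const 720)).add
        ((hasDerivAt_pow 8 u).div_const 40320)).sub (Real.hasDerivAt_cos u)
    exact h.congr_deriv (by push_cast; ring)
  · simp
  · exact sin7



private lemma Qpoly (p s u : ℝ) (hp1 : 3.141592 ≤ p) (hp2 : p ≤ 3.141593)
    (hs1 : 1.414213 ≤ s) (hs2 : s ≤ 1.414214) (hu1 : 0 ≤ u) (hu2 : u ≤ 0.6084) :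
    0 ≤ (p - 2*s) * (1 - u/12 + u^2/360 - u^3/20160) - p*(2-s) * (1/6 - u/120 + u^2/5040) := by
  have hd1 : (0.313164:ℝ) ≤ p - 2*s := by linarith
  have hd2 : p - 2*s ≤ 0.313167 := by linarith
  have hE1 : (1.840300:ℝ) ≤ p*(2-s) := by nlinarith
  have hE2 : p*(2-s) ≤ 1.8403044 := by nlinarith
  have hpos1 : (0:ℝ) ≤ 1 - u/12 + u^2/360 - u^3/20160 := by nlinarith [sq_nonneg u, mul_nonneg (mul_nonneg hu1 hu1) hu1]
  have hpos2 : (0:ℝ) ≤ 1/6 - u/120 + u^2/5040 := by nlinarith [sq_nonneg u]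
  have key : 0 ≤ (0.313164:ℝ) * (1 - u/12 + u^2/360 - u^3/20160) - 1.8403044 * (1/6 - u/120 + u^2/5040) := by
    nlinarith [mul_nonneg (sub_nonneg.2 hu2) hu1, mul_nonneg (mul_nonneg (sub_nonneg.2 hu2) hu1) hu1, sq_nonneg u]
  nlinarith [mul_le_mul_of_nonneg_right hd1 hpos1, mul_le_mul_of_nonneg_right hE2 hpos2]
private lemma sqrt2_lb : 1.414213 ≤ Real.sqrt 2 := by
  have h : Real.sqrt 2 ^ 2 = 2 := Real.sq_sqrt (by norm_num)
  nlinarith [Real.sqrt_nonneg 2]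
private lemma sqrt2_ub : Real.sqrt 2 ≤ 1.414214 := by
  have h : Real.sqrt 2 ^ 2 = 2 := Real.sq_sqrt (by norm_num)
  nlinarith [Real.sqrt_nonneg 2]


private lemma keyG (t : ℝ) (ht0 : 0 ≤ t) (ht1 : t ≤ π/4) :
    0 ≤ π*(2-Real.sqrt 2) * Real.sin t - Real.sqrt 2*(4-π)*t
      - 2*(π-2*Real.sqrt 2)*(t*Real.cos t) := by
  set s2 := Real.sqrt 2 with hs2def
  have hs1 : 1.414213 ≤ s2 := sqrt2_lb
  have hs2 : s2 ≤ 1.414214 := sqrt2_ub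
  have hp1 : 3.141592 ≤ π := by linarith [Real.pi_gt_d6]
  have hp2 : π ≤ 3.141593 := by linarith [Real.pi_lt_d6]
  rcases le_or_gt t 0.78 with hcase | hcase
  · -- polynomial regime
    have hQ := Qpoly π s2 (t^2) hp1 hp2 hs1 hs2 (sq_nonneg t) (by nlinarith)
    have term1 : 0 ≤ (2*(π - 2*s2)*t) *
        ((1 - t^2/2 + t^4/24 - t^6/720 + t^8/40320) - Real.cos t) := by
      have := cos8 t ht0
      have h2d : 0 ≤ 2*(π-2*s2)*t := by nlinarith
      exact mul_nonneg h2d this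
    have term2 : 0 ≤ (π*(2-s2)) * (Real.sin t - (t - t^3/6 + t^5/120 - t^7/5040)) := by
      have := sin7 t ht0
      have hE : 0 ≤ π*(2-s2) := by nlinarith
      exact mul_nonneg hE this
    have term3 : 0 ≤ t^3 * ((π - 2*s2) * (1 - t^2/12 + (t^2)^2/360 - (t^2)^3/20160)
        - π*(2-s2) * (1/6 - t^2/120 + (t^2)^2/5040)) :=
      mul_nonneg (by positivity) hQ
    nlinarith [term1, term2, term3]
  · -- antitone regime
    set F := s2*(4-π) with hFdef
    set E := π*(2-s2) with hEdef
    set d := π - 2*s2 with hddef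
    set g : ℝ → ℝ := fun u => E * Real.sin u - F * u - 2*d*(u*Real.cos u) with hgdef
    have hder : ∀ u : ℝ, HasDerivAt g (E*Real.cos u - F - 2*d*(Real.cos u - u*Real.sin u)) u := by
      intro u
      exact ((((Real.hasDerivAt_sin u).const_mul E).sub ((hasDerivAt_id u).const_mul F)).sub
        (((hasDerivAt_id u).mul (Real.hasDerivAt_cos u)).const_mul (2*d))).congr_deriv (by simp only [id_eq]; ring)
    have hanti : AntitoneOn g (Set.Icc 0.78 (π/4)) := by
      apply antitoneOn_of_deriv_nonpos (convex_Icc _ _)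
        (fun u _ => (hder u).continuousAt.continuousWithinAt)
        (fun u hu => (hder u).differentiableAt.differentiableWithinAt)
      intro u hu
      rw [interior_Icc] at hu
      rw [(hder u).deriv]
      obtain ⟨hu1, hu2⟩ := hu
      have hu0 : (0:ℝ) ≤ u := by linarith
      have hsinle : Real.sin u ≤ s2/2 := by
        have := Real.strictMonoOn_sin.monotoneOn ⟨by linarith [Real.pi_pos], by linarith [Real.pi_pos]⟩
          ⟨by linarith [Real.pi_pos], by linarith [Real.pi_pos]⟩ hu2.le
        simpa [Real.sin_pi_div_four] using this
      have hsinpos : 0 ≤ Real.sin u := Real.sin_nonneg_of_nonneg_of_le_pi hu0 (by linarith)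
      have hcosle : Real.cos u ≤ Real.cos 0.78 :=
        Real.cos_le_cos_of_nonneg_of_le_pi (by norm_num) (by linarith) hu1.le
      have hcos78 : Real.cos 0.78 ≤ 0.711223 := by
        have := cos4 0.78 (by norm_num)
        norm_num at this ⊢
        linarith
      have husin : u * Real.sin u ≤ (π/4) * (s2/2) :=
        mul_le_mul hu2.le hsinle hsinpos (by positivity)
      -- need : E cos u - F - 2d (cos u - u sin u) ≤ 0
      nlinarith [husin, hcosle, hcos78, mul_le_mul hp2 hs2 (by linarith) (by norm_num)]
    have hval : g (π/4) = 0 := by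
      simp only [hgdef, Real.sin_pi_div_four, Real.cos_pi_div_four, hEdef, hFdef, hddef]
      ring
    have := hanti (Set.mem_Icc.mpr ⟨hcase.le, ht1⟩) (Set.mem_Icc.mpr ⟨by nlinarith, le_refl _⟩) ht1
    rw [hval] at this
    simpa [hgdef] using this


theorem stmt_8 : ∀ x ∈ Set.Icc (0:ℝ) 1,
    Real.arcsin x ≤
      (Real.pi * (2 - Real.sqrt 2) / (Real.pi - 2 * Real.sqrt 2)) *
        (Real.sqrt (1 + x) - Real.sqrt (1 - x)) /
      (Real.sqrt 2 * (4 - Real.pi) / (Real.pi - 2 * Real.sqrt 2) +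
        Real.sqrt (1 + x) + Real.sqrt (1 - x)) := by
  intro x hx
  obtain ⟨hx0, hx1⟩ := hx
  have hs1 : 1.414213 ≤ Real.sqrt 2 := sqrt2_lb
  have hs2 : Real.sqrt 2 ≤ 1.414214 := sqrt2_ub
  have hp1 : 3.141592 ≤ π := by linarith [Real.pi_gt_d6]
  have hp2 : π ≤ 3.141593 := by linarith [Real.pi_lt_d6]
  set θ := Real.arcsin x with hθdef
  have hθ0 : 0 ≤ θ := Real.arcsin_nonneg.mpr hx0
  have hθπ : θ ≤ π/2 := Real.arcsin_le_pi_div_two x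
  set t := θ/2 with htdef
  have ht0 : 0 ≤ t := by positivity
  have ht4 : t ≤ π/4 := by rw [htdef]; linarith
  have hsx : Real.sin θ = x := Real.sin_arcsin (by linarith) hx1
  have h2t : 2*t = θ := by rw [htdef]; ring
  have hsc : 2*Real.sin t*Real.cos t = x := by
    rw [← Real.sin_two_mul, h2t, hsx]
  have hpyth := Real.sin_sq_add_cos_sq t
  have hcpos : 0 < Real.cos t := Real.cos_pos_of_mem_Ioo
    ⟨by linarith [Real.pi_pos], by linarith [Real.pi_pos]⟩
  have hspos : 0 ≤ Real.sin t := Real.sin_nonneg_of_nonneg_of_le_pi ht0 (by linarith [Real.pi_pos])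
  have hcos2t : 0 ≤ Real.cos (2*t) := by
    rw [h2t]; exact Real.cos_nonneg_of_mem_Icc ⟨by linarith [Real.pi_pos], hθπ⟩
  have hcs : 0 ≤ Real.cos t - Real.sin t := by
    have h1 : Real.cos (2*t) = (Real.cos t - Real.sin t)*(Real.cos t + Real.sin t) := by
      rw [Real.cos_two_mul]; nlinarith [hpyth]
    nlinarith [hcos2t, hcpos, hspos]
  have e1 : (Real.cos t + Real.sin t)^2 = 1 + x := by nlinarith [hpyth, hsc]
  have e2 : (Real.cos t - Real.sin t)^2 = 1 - x := by nlinarith [hpyth, hsc]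
  have hsq1 : Real.sqrt (1+x) = Real.cos t + Real.sin t := by
    rw [← e1, Real.sqrt_sq (by linarith)]
  have hsq2 : Real.sqrt (1-x) = Real.cos t - Real.sin t := by
    rw [← e2, Real.sqrt_sq hcs]
  rw [hsq1, hsq2]
  have hd : 0 < π - 2*Real.sqrt 2 := by linarith
  have hF : 0 < Real.sqrt 2 * (4-π) := mul_pos (Real.sqrt_pos.mpr (by norm_num)) (by linarith)
  have hDpos : 0 < Real.sqrt 2 * (4-π)/(π - 2*Real.sqrt 2)
      + (Real.cos t + Real.sin t) + (Real.cos t - Real.sin t) := by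
    have := div_pos hF hd
    linarith
  rw [le_div_iff₀ hDpos, ← h2t]
  have key := keyG t ht0 ht4
  have expand : π*(2-Real.sqrt 2)/(π-2*Real.sqrt 2)
        * ((Real.cos t + Real.sin t)-(Real.cos t - Real.sin t))
      - (2*t) * (Real.sqrt 2*(4-π)/(π-2*Real.sqrt 2)
        + (Real.cos t + Real.sin t) + (Real.cos t - Real.sin t))
      = (2/(π-2*Real.sqrt 2)) * (π*(2-Real.sqrt 2) * Real.sin t - Real.sqrt 2*(4-π)*t
        - 2*(π-2*Real.sqrt 2)*(t*Real.cos t)) := by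
    field_simp
    ring
  have hpos : 0 ≤ (2/(π-2*Real.sqrt 2)) * (π*(2-Real.sqrt 2) * Real.sin t
      - Real.sqrt 2*(4-π)*t - 2*(π-2*Real.sqrt 2)*(t*Real.cos t)) :=
    mul_nonneg (by positivity) key
  linarith [expand, hpos]
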